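/- Let A be a unital C*-algebra, let a ∈ A be positive, and suppose there is θ > 0 such that the spectrum of a contains no point of the open interval (0, θ) (i.e., 0 is an isolated point of the spectrum, or a is invertible). Let g : ℝ → ℝ be the continuous function g(t) = min(1, max(0, (2/θ)·t − 1)) (so g ≡ 0 on (−∞, θ/2] and g ≡ 1 on [θ, ∞)), and set p := cfc g a, the continuous functional calculus of g applied to a. Then p is a projection (p is self-adjoint and p·p = p), it satisfies a·p = a, and a and p are Cuntz equivalent: there exist sequences (vₙ) and (wₙ) in A with ‖vₙ · p · vₙ* − a‖ → 0 and ‖wₙ · a · wₙ* − p‖ → 0. -/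

import Mathlib

/-- The first case of the proof of Lemma 6.1: if `0` is isolated in the spectrum of a
positive element `a` (no spectrum in `(0, θ)`), then `p := g_θ(a)` is a projection
with `a·p = a` which is Cuntz equivalent to `a`. -/
theorem stmt9 {A : Type*} [CStarAlgebra A] [PartialOrder A] [StarOrderedRing A] (a : A) (ha : 0 ≤ a)
    (θ : ℝ) (hθ : 0 < θ) (hsp : spectrum ℝ a ∩ Set.Ioo 0 θ = ∅) :
    let g : ℝ → ℝ := fun t => min 1 (max 0 ((2 / θ) * t - 1))
    let p : A := cfc g a
    IsSelfAdjoint p ∧ p * p = p ∧ a * p = a ∧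
      (∃ v : ℕ → A,
        Filter.Tendsto (fun n => ‖v n * p * star (v n) - a‖) Filter.atTop (nhds 0)) ∧
      (∃ w : ℕ → A,
        Filter.Tendsto (fun n => ‖w n * a * star (w n) - p‖) Filter.atTop (nhds 0)) := by
  intro g p
  have hsa : IsSelfAdjoint a := IsSelfAdjoint.of_nonneg ha
  have hgc : Continuous g := by fun_prop
  -- spectrum dichotomy
  have hdich : ∀ t ∈ spectrum ℝ a, t = 0 ∨ θ ≤ t := by
    intro t ht
    have h0 : 0 ≤ t := spectrum_nonneg_of_nonneg ha ht
    rcases eq_or_lt_of_le h0 with h | h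
    · exact Or.inl h.symm
    · right
      by_contra hlt
      push_neg at hlt
      have : t ∈ spectrum ℝ a ∩ Set.Ioo 0 θ := ⟨ht, h, hlt⟩
      simp [hsp] at this
  have hg0 : g 0 = 0 := by simp [g]
  have hg1 : ∀ t, θ ≤ t → g t = 1 := by
    intro t htt
    have h1 : (1:ℝ) ≤ (2/θ) * t - 1 := by
      have : (2/θ) * θ ≤ (2/θ) * t := by
        apply mul_le_mul_of_nonneg_left htt (by positivity)
      rw [div_mul_cancel₀] at this
      · linarith
      · exact hθ.ne'
    simp only [g]
    rw [max_eq_right (le_trans zero_le_one h1), min_eq_left h1]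
  have hpsa : IsSelfAdjoint p := cfc_predicate g a
  have hid : ContinuousOn (fun t : ℝ => t) (spectrum ℝ a) := continuousOn_id
  have hgon : ContinuousOn g (spectrum ℝ a) := hgc.continuousOn
  have hpp : p * p = p := by
    rw [show p * p = cfc (fun t => g t * g t) a from (cfc_mul g g a hgon hgon).symm]
    apply cfc_congr
    intro t ht
    rcases hdich t ht with h | h
    · simp [h, hg0]
    · simp [hg1 t h]
  have hap : a * p = a := by
    conv_lhs => rw [← cfc_id' ℝ a]
    rw [show cfc (fun t : ℝ => t) a * p = cfc (fun t => t * g t) a from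
      (cfc_mul _ g a hid hgon).symm]
    conv_rhs => rw [← cfc_id' ℝ a]
    apply cfc_congr
    intro t ht
    rcases hdich t ht with h | h
    · simp [h]
    · simp [hg1 t h]
  refine ⟨hpsa, hpp, hap, ?_, ?_⟩
  · -- v = sqrt a, constant sequence
    set v : A := cfc Real.sqrt a with hv
    have hvsa : IsSelfAdjoint v := cfc_predicate _ a
    have hvpv : v * p * star v = a := by
      rw [hvsa.star_eq]
      have hsq : ContinuousOn Real.sqrt (spectrum ℝ a) := Real.continuous_sqrt.continuousOn
      rw [show v * p = cfc (fun t => Real.sqrt t * g t) a from (cfc_mul _ g a hsq hgon).symm]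
      rw [show cfc (fun t => Real.sqrt t * g t) a * v
        = cfc (fun t => (Real.sqrt t * g t) * Real.sqrt t) a from
        (cfc_mul _ _ a (hsq.mul hgon) hsq).symm]
      conv_rhs => rw [← cfc_id' ℝ a]
      apply cfc_congr
      intro t ht
      rcases hdich t ht with h | h
      · simp [h]
      · have h0 : 0 ≤ t := le_trans hθ.le h
        simp [hg1 t h, Real.mul_self_sqrt h0]
    exact ⟨fun _ => v, by simp [hvpv]⟩
  · -- w = cfc h a with h t = g t / sqrt (max t (θ/2))
    set h : ℝ → ℝ := fun t => g t / Real.sqrt (max t (θ/2)) with hh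
    have hhc : Continuous h := by
      apply hgc.div (Real.continuous_sqrt.comp (continuous_id.max continuous_const))
      intro t
      have h1 : (0:ℝ) < max t (θ/2) := lt_max_of_lt_right (by linarith)
      exact ne_of_gt (Real.sqrt_pos.mpr h1)
    set w : A := cfc h a with hw
    have hwsa : IsSelfAdjoint w := cfc_predicate _ a
    have hwaw : w * a * star w = p := by
      rw [hwsa.star_eq]
      conv_lhs => rw [← cfc_id' ℝ a]
      have hhon : ContinuousOn h (spectrum ℝ a) := hhc.continuousOn
      rw [show w * cfc (fun t : ℝ => t) a = cfc (fun t => h t * t) a from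
        (cfc_mul _ _ a hhon hid).symm]
      rw [show cfc (fun t => h t * t) a * w = cfc (fun t => (h t * t) * h t) a from
        (cfc_mul _ _ a (hhon.mul hid) hhon).symm]
      apply cfc_congr
      intro t ht
      rcases hdich t ht with he | he
      · simp [he, h, hg0]
      · have h0 : 0 < t := lt_of_lt_of_le hθ he
        have hmax : max t (θ/2) = t := max_eq_left (by linarith)
        have hs : Real.sqrt t ≠ 0 := ne_of_gt (Real.sqrt_pos.mpr h0)
        simp only [h, hmax, hg1 t he]
        field_simp
        rw [Real.sq_sqrt h0.le]
    exact ⟨fun _ => w, by simp [hwaw]⟩
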